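/- Let π and μ be policies with π(a|s) > 0 and μ(a|s) > 0 for all s ∈ S, a ∈ A. Then the expected return satisfies the global lower bound J(π) ≥ J(μ) + Σ_s d^μ(s) Σ_a Q^μ(s,a) μ(a|s) log(π(a|s)/μ(a|s)). -/

import Mathlib

namespace LBSA

/-- Log-sum inequality (with Lean's `Real.log` conventions). -/
lemma logsum {ι : Type*} (t : Finset ι) (x y : ι → ℝ)
    (hx : ∀ i ∈ t, 0 ≤ x i) (hy : ∀ i ∈ t, 0 ≤ y i)
    (hxy : ∀ i ∈ t, x i = 0 ↔ y i = 0) :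
    ∑ i ∈ t, y i * Real.log (x i / y i)
      ≤ (∑ i ∈ t, y i) * Real.log ((∑ i ∈ t, x i) / ∑ i ∈ t, y i) := by
  set X := ∑ i ∈ t, x i with hX
  set Y := ∑ i ∈ t, y i with hY
  by_cases hY0 : Y = 0
  · have hyz : ∀ i ∈ t, y i = 0 :=
      (Finset.sum_eq_zero_iff_of_nonneg hy).mp (hY ▸ hY0)
    have : ∑ i ∈ t, y i * Real.log (x i / y i) = 0 := by
      apply Finset.sum_eq_zero
      intro i hi; rw [hyz i hi]; ring
    rw [this, hY0]; ring_nf; simp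
  · have hYpos : 0 < Y := lt_of_le_of_ne (Finset.sum_nonneg hy) (Ne.symm hY0)
    have hXpos : 0 < X := by
      obtain ⟨i, hi, hyi⟩ : ∃ i ∈ t, y i ≠ 0 := by
        by_contra h; push_neg at h
        exact hY0 (Finset.sum_eq_zero h)
      have hxi : 0 < x i := by
        rcases lt_or_eq_of_le (hx i hi) with h | h
        · exact h
        · exact absurd ((hxy i hi).mp h.symm) hyi
      calc 0 < x i := hxi
        _ ≤ X := Finset.single_le_sum hx hi
    have key : ∀ i ∈ t, y i * Real.log (x i / y i)
        ≤ y i * Real.log (X / Y) + x i * Y / X - y i := by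
      intro i hi
      by_cases hyi : y i = 0
      · have hxi : x i = 0 := (hxy i hi).mpr hyi
        rw [hyi, hxi]; simp
      · have hypos : 0 < y i := lt_of_le_of_ne (hy i hi) (Ne.symm hyi)
        have hxi : x i ≠ 0 := fun h => hyi ((hxy i hi).mp h)
        have hxpos : 0 < x i := lt_of_le_of_ne (hx i hi) (Ne.symm hxi)
        have hratio : 0 < x i * Y / (y i * X) := by positivity
        have hlog : Real.log (x i * Y / (y i * X)) ≤ x i * Y / (y i * X) - 1 :=
          Real.log_le_sub_one_of_pos hratio
        have hsplit : Real.log (x i / y i) = Real.log (X / Y) + Real.log (x i * Y / (y i * X)) := by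
          rw [Real.log_div hxi hyi, Real.log_div (ne_of_gt hXpos) (ne_of_gt hYpos),
            Real.log_div (by positivity) (by positivity),
            Real.log_mul (ne_of_gt hxpos) (ne_of_gt hYpos),
            Real.log_mul (ne_of_gt hypos) (ne_of_gt hXpos)]
          ring
        calc y i * Real.log (x i / y i)
            = y i * Real.log (X / Y) + y i * Real.log (x i * Y / (y i * X)) := by
              rw [hsplit]; ring
          _ ≤ y i * Real.log (X / Y) + y i * (x i * Y / (y i * X) - 1) := by
              nlinarith [mul_le_mul_of_nonneg_left hlog (le_of_lt hypos)]
          _ = y i * Real.log (X / Y) + x i * Y / X - y i := by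
              have : y i * (x i * Y / (y i * X)) = x i * Y / X := by
                field_simp
              rw [mul_sub, this]; ring
    calc ∑ i ∈ t, y i * Real.log (x i / y i)
        ≤ ∑ i ∈ t, (y i * Real.log (X / Y) + x i * Y / X - y i) :=
          Finset.sum_le_sum key
      _ = Y * Real.log (X / Y) + X * Y / X - Y := by
          rw [Finset.sum_sub_distrib, Finset.sum_add_distrib, ← Finset.sum_mul,
            ← Finset.sum_div, ← Finset.sum_mul, ← hX, ← hY]
      _ = Y * Real.log (X / Y) := by field_simp; ring

/-- The auxiliary `Z` sequence. -/
noncomputable def Zseq {S : Type*} [Fintype S] (M N : Matrix S S ℝ) (Y : ℕ → S → ℝ) :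
    ℕ → S → ℝ
  | 0 => 0
  | k + 1 => fun s => Matrix.vecMul (Zseq M N Y k) M s + Matrix.vecMul (Y k) N s

section Stoch

variable {S : Type*} [Fintype S] [DecidableEq S] {M : Matrix S S ℝ}

lemma pow_entry_nonneg (hM : ∀ s s', 0 ≤ M s s') (k : ℕ) :
    ∀ s s', 0 ≤ (M ^ k) s s' := by
  induction k with
  | zero => intro s s'; simp [Matrix.one_apply]; split <;> norm_num
  | succ k ih =>
    intro s s'
    rw [pow_succ, Matrix.mul_apply]
    exact Finset.sum_nonneg fun t _ => mul_nonneg (ih s t) (hM t s')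

lemma pow_row_sum (hM : ∀ s s', 0 ≤ M s s') (hrow : ∀ s, ∑ s', M s s' = 1) (k : ℕ) :
    ∀ s, ∑ s', (M ^ k) s s' = 1 := by
  induction k with
  | zero => intro s; simp [Matrix.one_apply]
  | succ k ih =>
    intro s
    simp only [pow_succ, Matrix.mul_apply]
    rw [Finset.sum_comm]
    calc ∑ t, ∑ s', (M ^ k) s t * M t s' = ∑ t, (M ^ k) s t * ∑ s', M t s' := by
          simp [Finset.mul_sum]
      _ = 1 := by simp [hrow, ih s]

lemma pow_entry_le_one (hM : ∀ s s', 0 ≤ M s s') (hrow : ∀ s, ∑ s', M s s' = 1) (k : ℕ) (s s' : S) :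
    (M ^ k) s s' ≤ 1 := by
  calc (M ^ k) s s' ≤ ∑ t, (M ^ k) s t :=
        Finset.single_le_sum (fun t _ => pow_entry_nonneg hM k s t) (Finset.mem_univ s')
    _ = 1 := pow_row_sum hM hrow k s

lemma abs_mulVec_le (hM : ∀ s s', 0 ≤ M s s') (hrow : ∀ s, ∑ s', M s s' = 1)
    (k : ℕ) (v : S → ℝ) (s : S) :
    |((M ^ k).mulVec v) s| ≤ ∑ t, |v t| := by
  calc |((M ^ k).mulVec v) s| = |∑ t, (M ^ k) s t * v t| := rfl
    _ ≤ ∑ t, |(M ^ k) s t * v t| := Finset.abs_sum_le_sum_abs _ _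
    _ ≤ ∑ t, |v t| := by
        apply Finset.sum_le_sum
        intro t _
        rw [abs_mul, abs_of_nonneg (pow_entry_nonneg hM k s t)]
        calc (M ^ k) s t * |v t| ≤ 1 * |v t| :=
              mul_le_mul_of_nonneg_right (pow_entry_le_one hM hrow k s t) (abs_nonneg _)
          _ = |v t| := one_mul _

end Stoch

end LBSA


/-- Induced state-transition matrix `M_π(s,s') = ∑ a, π(a|s) p(s'|s,a)`. -/
noncomputable def transMat {S A : Type*} [Fintype S] [Fintype A]
    (p : S → A → S → ℝ) (π : S → A → ℝ) : Matrix S S ℝ :=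
  Matrix.of fun s s' => ∑ a, π s a * p s a s'

/-- Expected one-step reward `r_π(s) = ∑ a, π(a|s) r(s,a)`. -/
noncomputable def rPol {S A : Type*} [Fintype A]
    (r : S → A → ℝ) (π : S → A → ℝ) (s : S) : ℝ :=
  ∑ a, π s a * r s a

/-- Value function `V^π(s) = ∑_{k} γ^k (M_π^k r_π)(s)`. -/
noncomputable def Vpi {S A : Type*} [Fintype S] [Fintype A] [DecidableEq S]
    (p : S → A → S → ℝ) (r : S → A → ℝ) (γ : ℝ) (π : S → A → ℝ) (s : S) : ℝ :=
  ∑' k : ℕ, γ ^ k * ((transMat p π ^ k).mulVec (rPol r π)) s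

/-- Action-value function `Q^π(s,a) = r(s,a) + γ ∑_{s'} p(s'|s,a) V^π(s')`. -/
noncomputable def Qpi {S A : Type*} [Fintype S] [Fintype A] [DecidableEq S]
    (p : S → A → S → ℝ) (r : S → A → ℝ) (γ : ℝ) (π : S → A → ℝ) (s : S) (a : A) : ℝ :=
  r s a + γ * ∑ s', p s a s' * Vpi p r γ π s'

/-- Discounted state distribution `d^π(s) = ∑_{t} γ^t (d₀ᵀ M_π^t)(s)`. -/
noncomputable def dPi {S A : Type*} [Fintype S] [Fintype A] [DecidableEq S]
    (p : S → A → S → ℝ) (d₀ : S → ℝ) (γ : ℝ) (π : S → A → ℝ) (s : S) : ℝ :=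
  ∑' t : ℕ, γ ^ t * Matrix.vecMul d₀ (transMat p π ^ t) s

/-- Expected return `J(π) = ∑ s, d₀(s) V^π(s)`. -/
noncomputable def Jpi {S A : Type*} [Fintype S] [Fintype A] [DecidableEq S]
    (p : S → A → S → ℝ) (r : S → A → ℝ) (d₀ : S → ℝ) (γ : ℝ) (π : S → A → ℝ) : ℝ :=
  ∑ s, d₀ s * Vpi p r γ π s

/-- Global lower bound in the state-action formulation:
`J(π) ≥ J(μ) + ∑ s, d^μ(s) ∑ a, Q^μ(s,a) μ(a|s) log (π(a|s) / μ(a|s))`. -/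
theorem lower_bound_state_action
    {S A : Type*} [Fintype S] [Fintype A] [DecidableEq S] [Nonempty S] [Nonempty A]
    (p : S → A → S → ℝ) (hp0 : ∀ s a s', 0 ≤ p s a s') (hp1 : ∀ s a, ∑ s', p s a s' = 1)
    (r : S → A → ℝ) (hr : ∀ s a, 0 < r s a)
    (d₀ : S → ℝ) (hd₀ : ∀ s, 0 ≤ d₀ s) (hd₀sum : ∑ s, d₀ s = 1)
    (γ : ℝ) (hγ0 : 0 ≤ γ) (hγ1 : γ < 1)
    (π μ : S → A → ℝ)
    (hπpos : ∀ s a, 0 < π s a) (hπsum : ∀ s, ∑ a, π s a = 1)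
    (hμpos : ∀ s a, 0 < μ s a) (hμsum : ∀ s, ∑ a, μ s a = 1) :
    Jpi p r d₀ γ μ +
        ∑ s, dPi p d₀ γ μ s * ∑ a, Qpi p r γ μ s a * μ s a * Real.log (π s a / μ s a)
      ≤ Jpi p r d₀ γ π := by
  classical
  set Mπ := transMat p π with hMπdef
  set Mμ := transMat p μ with hMμdef
  set rπ := rPol r π with hrπdef
  set rμ := rPol r μ with hrμdef
  have hMπ0 : ∀ s s', 0 ≤ Mπ s s' := by
    intro s s'
    exact Finset.sum_nonneg fun a _ => mul_nonneg (hπpos s a).le (hp0 s a s')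
  have hMμ0 : ∀ s s', 0 ≤ Mμ s s' := by
    intro s s'
    exact Finset.sum_nonneg fun a _ => mul_nonneg (hμpos s a).le (hp0 s a s')
  have hMπrow : ∀ s, ∑ s', Mπ s s' = 1 := by
    intro s
    show ∑ s', ∑ a, π s a * p s a s' = 1
    rw [Finset.sum_comm]
    calc ∑ a, ∑ s', π s a * p s a s' = ∑ a, π s a * ∑ s', p s a s' := by
          simp [Finset.mul_sum]
      _ = 1 := by simp [hp1, hπsum]
  have hMμrow : ∀ s, ∑ s', Mμ s s' = 1 := by
    intro s
    show ∑ s', ∑ a, μ s a * p s a s' = 1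
    rw [Finset.sum_comm]
    calc ∑ a, ∑ s', μ s a * p s a s' = ∑ a, μ s a * ∑ s', p s a s' := by
          simp [Finset.mul_sum]
      _ = 1 := by simp [hp1, hμsum]
  set X : ℕ → S → ℝ := fun k => Matrix.vecMul d₀ (Mπ ^ k) with hXdef
  set Y : ℕ → S → ℝ := fun k => Matrix.vecMul d₀ (Mμ ^ k) with hYdef
  set N : Matrix S S ℝ :=
    Matrix.of (fun s s' => ∑ a, μ s a * Real.log (π s a / μ s a) * p s a s') with hNdef
  set hhat : S → ℝ := fun s => ∑ a, μ s a * Real.log (π s a / μ s a) * r s a with hhhatdef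
  set Z : ℕ → S → ℝ := LBSA.Zseq Mμ N Y with hZdef
  have hγk : ∀ k : ℕ, (0:ℝ) ≤ γ ^ k := fun k => pow_nonneg hγ0 k
  -- basic positivity/normalization for X, Y
  have hX0 : ∀ k s, 0 ≤ X k s := by
    intro k s
    exact Finset.sum_nonneg fun t _ => mul_nonneg (hd₀ t) (LBSA.pow_entry_nonneg hMπ0 k t s)
  have hY0' : ∀ k s, 0 ≤ Y k s := by
    intro k s
    exact Finset.sum_nonneg fun t _ => mul_nonneg (hd₀ t) (LBSA.pow_entry_nonneg hMμ0 k t s)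
  have hXsum1 : ∀ k, ∑ s, X k s = 1 := by
    intro k
    show ∑ s, ∑ t, d₀ t * (Mπ ^ k) t s = 1
    rw [Finset.sum_comm]
    calc ∑ t, ∑ s, d₀ t * (Mπ ^ k) t s = ∑ t, d₀ t * ∑ s, (Mπ ^ k) t s := by
          simp [Finset.mul_sum]
      _ = 1 := by simp [LBSA.pow_row_sum hMπ0 hMπrow k, hd₀sum]
  have hYsum1 : ∀ k, ∑ s, Y k s = 1 := by
    intro k
    show ∑ s, ∑ t, d₀ t * (Mμ ^ k) t s = 1
    rw [Finset.sum_comm]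
    calc ∑ t, ∑ s, d₀ t * (Mμ ^ k) t s = ∑ t, d₀ t * ∑ s, (Mμ ^ k) t s := by
          simp [Finset.mul_sum]
      _ = 1 := by simp [LBSA.pow_row_sum hMμ0 hMμrow k, hd₀sum]
  have hXle1 : ∀ k s, X k s ≤ 1 := by
    intro k s
    rw [← hXsum1 k]
    exact Finset.single_le_sum (fun t _ => hX0 k t) (Finset.mem_univ s)
  have hYle1 : ∀ k s, Y k s ≤ 1 := by
    intro k s
    rw [← hYsum1 k]
    exact Finset.single_le_sum (fun t _ => hY0' k t) (Finset.mem_univ s)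
  -- recurrences for X, Y, Z
  have hXrec : ∀ k s', X (k + 1) s' = ∑ s, X k s * Mπ s s' := by
    intro k s'
    show Matrix.vecMul d₀ (Mπ ^ (k+1)) s' = _
    rw [pow_succ, ← Matrix.vecMul_vecMul]
    rfl
  have hYrec : ∀ k s', Y (k + 1) s' = ∑ s, Y k s * Mμ s s' := by
    intro k s'
    show Matrix.vecMul d₀ (Mμ ^ (k+1)) s' = _
    rw [pow_succ, ← Matrix.vecMul_vecMul]
    rfl
  have hZrec : ∀ k s', Z (k + 1) s' = ∑ s, Z k s * Mμ s s' + ∑ s, Y k s * N s s' := by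
    intro k s'
    rfl
  -- support equality
  have hMc : ∀ (ρ : S → A → ℝ), (∀ s a, 0 < ρ s a) →
      ∀ s s', (transMat p ρ s s' = 0 ↔ ∀ a, p s a s' = 0) := by
    intro ρ hρ s s'
    show (∑ a, ρ s a * p s a s') = 0 ↔ _
    rw [Finset.sum_eq_zero_iff_of_nonneg (fun a _ => mul_nonneg (hρ s a).le (hp0 s a s'))]
    constructor
    · intro h a
      rcases mul_eq_zero.mp (h a (Finset.mem_univ a)) with h' | h'
      · exact absurd h' (ne_of_gt (hρ s a))
      · exact h'
    · intro h a _
      rw [h a, mul_zero]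
  have hMzero : ∀ s s', (Mπ s s' = 0 ↔ Mμ s s' = 0) :=
    fun s s' => (hMc π hπpos s s').trans (hMc μ hμpos s s').symm
  have hsupp : ∀ k s, (X k s = 0 ↔ Y k s = 0) := by
    intro k
    induction k with
    | zero =>
      intro s
      show Matrix.vecMul d₀ (Mπ ^ 0) s = 0 ↔ Matrix.vecMul d₀ (Mμ ^ 0) s = 0
      rw [pow_zero, pow_zero, Matrix.vecMul_one]
    | succ k ih =>
      intro s'
      rw [hXrec, hYrec,
        Finset.sum_eq_zero_iff_of_nonneg (fun s _ => mul_nonneg (hX0 k s) (hMπ0 s s')),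
        Finset.sum_eq_zero_iff_of_nonneg (fun s _ => mul_nonneg (hY0' k s) (hMμ0 s s'))]
      have key : ∀ s, (X k s * Mπ s s' = 0 ↔ Y k s * Mμ s s' = 0) := by
        intro s
        rw [mul_eq_zero, mul_eq_zero, ih s, hMzero s s']
      constructor
      · intro h s hs; exact (key s).mp (h s hs)
      · intro h s hs; exact (key s).mpr (h s hs)
  have hNz : ∀ s s', Mμ s s' = 0 → N s s' = 0 := by
    intro s s' h
    have hp' : ∀ a, p s a s' = 0 := (hMc μ hμpos s s').mp h
    show (∑ a, μ s a * Real.log (π s a / μ s a) * p s a s') = 0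
    exact Finset.sum_eq_zero fun a _ => by rw [hp' a, mul_zero]
  have hZzero : ∀ k s, Y k s = 0 → Z k s = 0 := by
    intro k
    induction k with
    | zero => intro s _; rfl
    | succ k ih =>
      intro s' h
      rw [hYrec] at h
      have hall : ∀ s, Y k s * Mμ s s' = 0 := by
        have := (Finset.sum_eq_zero_iff_of_nonneg
          (fun s _ => mul_nonneg (hY0' k s) (hMμ0 s s'))).mp h
        exact fun s => this s (Finset.mem_univ s)
      rw [hZrec]
      have h1 : ∀ s, Z k s * Mμ s s' = 0 := by
        intro s
        rcases mul_eq_zero.mp (hall s) with h' | h'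
        · rw [ih s h', zero_mul]
        · rw [h', mul_zero]
      have h2 : ∀ s, Y k s * N s s' = 0 := by
        intro s
        rcases mul_eq_zero.mp (hall s) with h' | h'
        · rw [h', zero_mul]
        · rw [hNz s s' h', mul_zero]
      rw [Finset.sum_eq_zero (fun s _ => h1 s), Finset.sum_eq_zero (fun s _ => h2 s), add_zero]
  -- the key invariant
  have hinv : ∀ k s, Z k s ≤ Y k s * Real.log (X k s / Y k s) := by
    intro k
    induction k with
    | zero =>
      intro s
      have hz : Z 0 s = 0 := rfl
      have hx : X 0 s = d₀ s := by
        show Matrix.vecMul d₀ (Mπ ^ 0) s = _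
        rw [pow_zero, Matrix.vecMul_one]
      have hy : Y 0 s = d₀ s := by
        show Matrix.vecMul d₀ (Mμ ^ 0) s = _
        rw [pow_zero, Matrix.vecMul_one]
      rw [hz, hx, hy]
      by_cases h : d₀ s = 0
      · rw [h]; simp
      · rw [div_self h, Real.log_one, mul_zero]
    | succ k ih =>
      intro s'
      set x : S × A → ℝ := fun q => X k q.1 * π q.1 q.2 * p q.1 q.2 s' with hxdef
      set y : S × A → ℝ := fun q => Y k q.1 * μ q.1 q.2 * p q.1 q.2 s' with hydef
      have hxnn : ∀ q : S × A, 0 ≤ x q :=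
        fun q => mul_nonneg (mul_nonneg (hX0 k q.1) (hπpos q.1 q.2).le) (hp0 q.1 q.2 s')
      have hynn : ∀ q : S × A, 0 ≤ y q :=
        fun q => mul_nonneg (mul_nonneg (hY0' k q.1) (hμpos q.1 q.2).le) (hp0 q.1 q.2 s')
      have hiff : ∀ q : S × A, (x q = 0 ↔ y q = 0) := by
        intro q
        show X k q.1 * π q.1 q.2 * p q.1 q.2 s' = 0 ↔ Y k q.1 * μ q.1 q.2 * p q.1 q.2 s' = 0
        rw [mul_eq_zero, mul_eq_zero, mul_eq_zero, mul_eq_zero, hsupp k q.1]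
        have h1 : ¬ π q.1 q.2 = 0 := ne_of_gt (hπpos q.1 q.2)
        have h2 : ¬ μ q.1 q.2 = 0 := ne_of_gt (hμpos q.1 q.2)
        tauto
      have hxsum : ∑ q : S × A, x q = X (k + 1) s' := by
        rw [hXrec, Fintype.sum_prod_type]
        apply Finset.sum_congr rfl
        intro s _
        show (∑ a, X k s * π s a * p s a s') = X k s * ∑ a, π s a * p s a s'
        rw [Finset.mul_sum]
        exact Finset.sum_congr rfl fun a _ => by ring
      have hysum : ∑ q : S × A, y q = Y (k + 1) s' := by
        rw [hYrec, Fintype.sum_prod_type]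
        apply Finset.sum_congr rfl
        intro s _
        show (∑ a, Y k s * μ s a * p s a s') = Y k s * ∑ a, μ s a * p s a s'
        rw [Finset.mul_sum]
        exact Finset.sum_congr rfl fun a _ => by ring
      -- per-pair identity
      have hpair : ∀ q : S × A,
          Y k q.1 * Real.log (X k q.1 / Y k q.1) * (μ q.1 q.2 * p q.1 q.2 s')
            + Y k q.1 * (μ q.1 q.2 * Real.log (π q.1 q.2 / μ q.1 q.2) * p q.1 q.2 s')
          = y q * Real.log (x q / y q) := by
        rintro ⟨s, a⟩
        by_cases hps : p s a s' = 0
        · show Y k s * Real.log (X k s / Y k s) * (μ s a * p s a s')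
              + Y k s * (μ s a * Real.log (π s a / μ s a) * p s a s')
            = Y k s * μ s a * p s a s' * Real.log (x (s, a) / (Y k s * μ s a * p s a s'))
          rw [hps]; ring
        · by_cases hy : Y k s = 0
          · show Y k s * Real.log (X k s / Y k s) * (μ s a * p s a s')
                + Y k s * (μ s a * Real.log (π s a / μ s a) * p s a s')
              = Y k s * μ s a * p s a s' * Real.log (x (s, a) / (Y k s * μ s a * p s a s'))
            rw [hy]; ring
          · have hYpos : 0 < Y k s := lt_of_le_of_ne (hY0' k s) (Ne.symm hy)
            have hx0 : X k s ≠ 0 := fun h => hy ((hsupp k s).mp h)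
            have hXpos : 0 < X k s := lt_of_le_of_ne (hX0 k s) (Ne.symm hx0)
            have hppos : 0 < p s a s' := lt_of_le_of_ne (hp0 s a s') (Ne.symm hps)
            have hratio : x (s, a) / y (s, a) = X k s / Y k s * (π s a / μ s a) := by
              show X k s * π s a * p s a s' / (Y k s * μ s a * p s a s') = _
              have h1 : Y k s * μ s a * p s a s' ≠ 0 :=
                ne_of_gt (mul_pos (mul_pos hYpos (hμpos s a)) hppos)
              have h2 : Y k s * μ s a ≠ 0 := ne_of_gt (mul_pos hYpos (hμpos s a))
              rw [div_mul_div_comm, div_eq_div_iff h1 h2]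
              ring
            show Y k s * Real.log (X k s / Y k s) * (μ s a * p s a s')
                + Y k s * (μ s a * Real.log (π s a / μ s a) * p s a s')
              = y (s, a) * Real.log (x (s, a) / y (s, a))
            rw [hratio, Real.log_mul (div_ne_zero (ne_of_gt hXpos) (ne_of_gt hYpos))
                (div_ne_zero (ne_of_gt (hπpos s a)) (ne_of_gt (hμpos s a))),
              Real.log_div (ne_of_gt hXpos) (ne_of_gt hYpos),
              Real.log_div (ne_of_gt (hπpos s a)) (ne_of_gt (hμpos s a))]
            show _ = Y k s * μ s a * p s a s' * _
            ring
      calc Z (k + 1) s' = ∑ s, Z k s * Mμ s s' + ∑ s, Y k s * N s s' := hZrec k s'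
        _ ≤ ∑ s, (Y k s * Real.log (X k s / Y k s)) * Mμ s s' + ∑ s, Y k s * N s s' := by
            apply add_le_add_left
            apply Finset.sum_le_sum
            intro s _
            exact mul_le_mul_of_nonneg_right (ih s) (hMμ0 s s')
        _ = ∑ q : S × A, y q * Real.log (x q / y q) := by
            rw [← Finset.sum_add_distrib, Fintype.sum_prod_type]
            apply Finset.sum_congr rfl
            intro s _
            have hMexp : Mμ s s' = ∑ a, μ s a * p s a s' := rfl
            have hNexp : N s s' = ∑ a, μ s a * Real.log (π s a / μ s a) * p s a s' := rfl
            calc Y k s * Real.log (X k s / Y k s) * Mμ s s' + Y k s * N s s'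
                = ∑ a, (Y k s * Real.log (X k s / Y k s) * (μ s a * p s a s')
                    + Y k s * (μ s a * Real.log (π s a / μ s a) * p s a s')) := by
                  rw [hMexp, hNexp, Finset.mul_sum, Finset.mul_sum, ← Finset.sum_add_distrib]
              _ = ∑ a, y (s, a) * Real.log (x (s, a) / y (s, a)) :=
                  Finset.sum_congr rfl fun a _ => hpair (s, a)
        _ ≤ (∑ q : S × A, y q) * Real.log ((∑ q : S × A, x q) / ∑ q : S × A, y q) :=
            LBSA.logsum Finset.univ x y (fun q _ => hxnn q) (fun q _ => hynn q)
              (fun q _ => hiff q)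
        _ = Y (k + 1) s' * Real.log (X (k + 1) s' / Y (k + 1) s') := by
            rw [hxsum, hysum]
  -- ℓ¹ bound on Z
  set B : ℝ := ∑ s, ∑ a, |μ s a * Real.log (π s a / μ s a)| with hBdef
  have hB0 : 0 ≤ B := Finset.sum_nonneg fun s _ => Finset.sum_nonneg fun a _ => abs_nonneg _
  have hNabs : ∀ s, ∑ s', |N s s'| ≤ B := by
    intro s
    have h1 : ∀ s', |N s s'| ≤ ∑ a, |μ s a * Real.log (π s a / μ s a)| * p s a s' := by
      intro s'
      calc |N s s'| = |∑ a, μ s a * Real.log (π s a / μ s a) * p s a s'| := rfl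
        _ ≤ ∑ a, |μ s a * Real.log (π s a / μ s a) * p s a s'| :=
            Finset.abs_sum_le_sum_abs _ _
        _ = ∑ a, |μ s a * Real.log (π s a / μ s a)| * p s a s' := by
            exact Finset.sum_congr rfl fun a _ => by
              rw [abs_mul, abs_of_nonneg (hp0 s a s')]
    calc ∑ s', |N s s'| ≤ ∑ s', ∑ a, |μ s a * Real.log (π s a / μ s a)| * p s a s' :=
          Finset.sum_le_sum fun s' _ => h1 s'
      _ = ∑ a, |μ s a * Real.log (π s a / μ s a)| := by
          rw [Finset.sum_comm]
          exact Finset.sum_congr rfl fun a _ => by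
            rw [← Finset.mul_sum, hp1 s a, mul_one]
      _ ≤ B := Finset.single_le_sum
          (f := fun s => ∑ a, |μ s a * Real.log (π s a / μ s a)|)
          (fun t _ => Finset.sum_nonneg fun a _ => abs_nonneg _) (Finset.mem_univ s)
  have hZl1 : ∀ k, ∑ s, |Z k s| ≤ k * B := by
    intro k
    induction k with
    | zero => simp [show ∀ s, Z 0 s = 0 from fun s => rfl]
    | succ k ih =>
      have step : ∀ s', |Z (k + 1) s'| ≤ ∑ s, |Z k s| * Mμ s s' + ∑ s, Y k s * |N s s'| := by
        intro s'
        rw [hZrec]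
        calc |∑ s, Z k s * Mμ s s' + ∑ s, Y k s * N s s'|
            ≤ |∑ s, Z k s * Mμ s s'| + |∑ s, Y k s * N s s'| := abs_add_le _ _
          _ ≤ ∑ s, |Z k s * Mμ s s'| + ∑ s, |Y k s * N s s'| :=
              add_le_add (Finset.abs_sum_le_sum_abs _ _) (Finset.abs_sum_le_sum_abs _ _)
          _ = ∑ s, |Z k s| * Mμ s s' + ∑ s, Y k s * |N s s'| := by
              congr 1
              · exact Finset.sum_congr rfl fun s _ => by
                  rw [abs_mul, abs_of_nonneg (hMμ0 s s')]
              · exact Finset.sum_congr rfl fun s _ => by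
                  rw [abs_mul, abs_of_nonneg (hY0' k s)]
      calc ∑ s', |Z (k + 1) s'|
          ≤ ∑ s', (∑ s, |Z k s| * Mμ s s' + ∑ s, Y k s * |N s s'|) :=
            Finset.sum_le_sum fun s' _ => step s'
        _ = ∑ s, |Z k s| + ∑ s, Y k s * ∑ s', |N s s'| := by
            rw [Finset.sum_add_distrib, Finset.sum_comm]
            congr 1
            · exact Finset.sum_congr rfl fun s _ => by
                rw [← Finset.mul_sum, hMμrow s, mul_one]
            · rw [Finset.sum_comm]
              exact Finset.sum_congr rfl fun s _ => by rw [← Finset.mul_sum]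
        _ ≤ k * B + ∑ s, Y k s * B := by
            apply add_le_add ih
            exact Finset.sum_le_sum fun s _ =>
              mul_le_mul_of_nonneg_left (hNabs s) (hY0' k s)
        _ = k * B + B := by rw [← Finset.sum_mul, hYsum1 k, one_mul]
        _ = (k + 1 : ℕ) * B := by push_cast; ring
  have hZabs : ∀ k s, |Z k s| ≤ k * B := by
    intro k s
    calc |Z k s| ≤ ∑ t, |Z k t| :=
          Finset.single_le_sum (f := fun t => |Z k t|) (fun t _ => abs_nonneg _)
            (Finset.mem_univ s)
      _ ≤ k * B := hZl1 k
  -- the per-horizon inequality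
  have dagger : ∀ k, ∑ s, Y k s * rμ s + (∑ s, Z k s * rμ s + ∑ s, Y k s * hhat s)
      ≤ ∑ s, X k s * rπ s := by
    intro k
    rw [← Finset.sum_add_distrib, ← Finset.sum_add_distrib]
    apply Finset.sum_le_sum
    intro s _
    have hrπ : rπ s = ∑ a, π s a * r s a := rfl
    have hrμ : rμ s = ∑ a, μ s a * r s a := rfl
    have hhh : hhat s = ∑ a, μ s a * Real.log (π s a / μ s a) * r s a := rfl
    rw [hrπ, hrμ, hhh, Finset.mul_sum, Finset.mul_sum, Finset.mul_sum, Finset.mul_sum,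
      ← Finset.sum_add_distrib, ← Finset.sum_add_distrib]
    apply Finset.sum_le_sum
    intro a _
    have key : Y k s * μ s a + (Z k s * μ s a + Y k s * (μ s a * Real.log (π s a / μ s a)))
        ≤ X k s * π s a := by
      by_cases hy : Y k s = 0
      · rw [hy, hZzero k s hy, (hsupp k s).mpr hy]
        simp
      · have hYpos : 0 < Y k s := lt_of_le_of_ne (hY0' k s) (Ne.symm hy)
        have hx0 : X k s ≠ 0 := fun h => hy ((hsupp k s).mp h)
        have hXpos : 0 < X k s := lt_of_le_of_ne (hX0 k s) (Ne.symm hx0)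
        have hZb := hinv k s
        have hrat : 0 < X k s * π s a / (Y k s * μ s a) :=
          div_pos (mul_pos hXpos (hπpos s a)) (mul_pos hYpos (hμpos s a))
        have hlog := Real.log_le_sub_one_of_pos hrat
        have hsplit : Real.log (X k s * π s a / (Y k s * μ s a))
            = Real.log (X k s / Y k s) + Real.log (π s a / μ s a) := by
          rw [show X k s * π s a / (Y k s * μ s a)
              = X k s / Y k s * (π s a / μ s a) by
            rw [div_mul_div_comm],
            Real.log_mul (div_ne_zero (ne_of_gt hXpos) (ne_of_gt hYpos))
              (div_ne_zero (ne_of_gt (hπpos s a)) (ne_of_gt (hμpos s a)))]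
        have hmain : Y k s * μ s a * Real.log (X k s * π s a / (Y k s * μ s a))
            ≤ X k s * π s a - Y k s * μ s a := by
          have h2 := mul_le_mul_of_nonneg_left hlog
            (le_of_lt (mul_pos hYpos (hμpos s a)))
          calc Y k s * μ s a * Real.log (X k s * π s a / (Y k s * μ s a))
              ≤ Y k s * μ s a * (X k s * π s a / (Y k s * μ s a) - 1) := h2
            _ = X k s * π s a - Y k s * μ s a := by
                rw [mul_sub, mul_div_cancel₀ _ (ne_of_gt (mul_pos hYpos (hμpos s a)))]
                ring
        have hZμ : Z k s * μ s a ≤ Y k s * Real.log (X k s / Y k s) * μ s a :=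
          mul_le_mul_of_nonneg_right hZb (hμpos s a).le
        rw [hsplit] at hmain
        nlinarith
    calc Y k s * (μ s a * r s a)
          + (Z k s * (μ s a * r s a) + Y k s * (μ s a * Real.log (π s a / μ s a) * r s a))
        = (Y k s * μ s a + (Z k s * μ s a + Y k s * (μ s a * Real.log (π s a / μ s a))))
            * r s a := by ring
      _ ≤ X k s * π s a * r s a := mul_le_mul_of_nonneg_right key (hr s a).le
      _ = X k s * (π s a * r s a) := by ring
  -- summability facts
  have hgeo : Summable (fun k : ℕ => γ ^ k) := summable_geometric_of_lt_one hγ0 hγ1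
  have hVsM : ∀ (M : Matrix S S ℝ), (∀ s s', 0 ≤ M s s') → (∀ s, ∑ s', M s s' = 1) →
      ∀ (v : S → ℝ) (s : S), Summable (fun k => γ ^ k * ((M ^ k).mulVec v) s) := by
    intro M h0 h1 v s
    apply Summable.of_norm_bounded (g := fun k => (∑ t, |v t|) * γ ^ k) (hgeo.mul_left _)
    intro k
    rw [Real.norm_eq_abs, abs_mul, abs_pow, abs_of_nonneg hγ0, mul_comm]
    exact mul_le_mul_of_nonneg_right (LBSA.abs_mulVec_le h0 h1 k v s) (hγk k)
  have hYs : ∀ s, Summable (fun k => γ ^ k * Y k s) := by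
    intro s
    apply Summable.of_norm_bounded (g := fun k => γ ^ k) hgeo
    intro k
    rw [Real.norm_eq_abs, abs_mul, abs_pow, abs_of_nonneg hγ0,
      abs_of_nonneg (hY0' k s)]
    calc γ ^ k * Y k s ≤ γ ^ k * 1 :=
          mul_le_mul_of_nonneg_left (hYle1 k s) (hγk k)
      _ = γ ^ k := mul_one _
  have hkgeo : Summable (fun k : ℕ => (k : ℝ) ^ 1 * γ ^ k) :=
    summable_pow_mul_geometric_of_norm_lt_one 1
      (by rwa [Real.norm_eq_abs, abs_of_nonneg hγ0])
  have hZs : ∀ s, Summable (fun k => γ ^ k * Z k s) := by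
    intro s
    apply Summable.of_norm_bounded (g := fun k : ℕ => B * ((k : ℝ) ^ 1 * γ ^ k)) (hkgeo.mul_left B)
    intro k
    rw [Real.norm_eq_abs, abs_mul, abs_pow, abs_of_nonneg hγ0]
    calc γ ^ k * |Z k s| ≤ γ ^ k * (k * B) :=
          mul_le_mul_of_nonneg_left (hZabs k s) (hγk k)
      _ = B * ((k : ℝ) ^ 1 * γ ^ k) := by ring
  have hbdd : ∀ (w : ℕ → S → ℝ) (v : S → ℝ), (∀ k s, 0 ≤ w k s) → (∀ k s, w k s ≤ 1) →
      Summable (fun k => γ ^ k * ∑ s, w k s * v s) := by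
    intro w v h0 h1
    apply Summable.of_norm_bounded (g := fun k => (∑ t, |v t|) * γ ^ k) (hgeo.mul_left _)
    intro k
    rw [Real.norm_eq_abs, abs_mul, abs_pow, abs_of_nonneg hγ0, mul_comm]
    apply mul_le_mul_of_nonneg_right _ (hγk k)
    calc |∑ s, w k s * v s| ≤ ∑ s, |w k s * v s| := Finset.abs_sum_le_sum_abs _ _
      _ ≤ ∑ s, |v s| := by
          apply Finset.sum_le_sum
          intro s _
          rw [abs_mul, abs_of_nonneg (h0 k s)]
          calc w k s * |v s| ≤ 1 * |v s| :=
                mul_le_mul_of_nonneg_right (h1 k s) (abs_nonneg _)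
            _ = |v s| := one_mul _
  have hXr : Summable (fun k => γ ^ k * ∑ s, X k s * rπ s) := hbdd X rπ hX0 hXle1
  have hYr : Summable (fun k => γ ^ k * ∑ s, Y k s * rμ s) := hbdd Y rμ hY0' hYle1
  have hYh : Summable (fun k => γ ^ k * ∑ s, Y k s * hhat s) := hbdd Y hhat hY0' hYle1
  have hZr : Summable (fun k => γ ^ k * ∑ s, Z k s * rμ s) := by
    apply Summable.of_norm_bounded
      (g := fun k : ℕ => (B * ∑ t, |rμ t|) * ((k : ℝ) ^ 1 * γ ^ k)) (hkgeo.mul_left _)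
    intro k
    rw [Real.norm_eq_abs, abs_mul, abs_pow, abs_of_nonneg hγ0]
    have h1 : |∑ s, Z k s * rμ s| ≤ (k * B) * ∑ t, |rμ t| := by
      calc |∑ s, Z k s * rμ s| ≤ ∑ s, |Z k s * rμ s| := Finset.abs_sum_le_sum_abs _ _
        _ ≤ ∑ s, (k * B) * |rμ s| := by
            apply Finset.sum_le_sum
            intro s _
            rw [abs_mul]
            exact mul_le_mul_of_nonneg_right (hZabs k s) (abs_nonneg _)
        _ = (k * B) * ∑ t, |rμ t| := by rw [← Finset.mul_sum]
    calc γ ^ k * |∑ s, Z k s * rμ s| ≤ γ ^ k * ((k * B) * ∑ t, |rμ t|) :=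
          mul_le_mul_of_nonneg_left h1 (hγk k)
      _ = (B * ∑ t, |rμ t|) * ((k : ℝ) ^ 1 * γ ^ k) := by ring
  -- Bellman equation for Vμ
  have bell : ∀ s, Vpi p r γ μ s = rμ s + γ * ∑ t, Mμ s t * Vpi p r γ μ t := by
    intro s
    have hsum : ∀ t, Summable (fun k => γ ^ k * ((Mμ ^ k).mulVec rμ) t) :=
      hVsM Mμ hMμ0 hMμrow rμ
    have h0 : Vpi p r γ μ s
        = γ ^ 0 * ((Mμ ^ 0).mulVec rμ) s
          + ∑' k : ℕ, γ ^ (k + 1) * ((Mμ ^ (k + 1)).mulVec rμ) s :=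
      Summable.tsum_eq_zero_add (hsum s)
    have hterm : ∀ k, γ ^ (k + 1) * ((Mμ ^ (k + 1)).mulVec rμ) s
        = ∑ t, (γ * Mμ s t) * (γ ^ k * ((Mμ ^ k).mulVec rμ) t) := by
      intro k
      rw [pow_succ' Mμ k, ← Matrix.mulVec_mulVec]
      show γ ^ (k + 1) * ∑ t, Mμ s t * ((Mμ ^ k).mulVec rμ) t = _
      rw [Finset.mul_sum]
      exact Finset.sum_congr rfl fun t _ => by ring
    rw [h0, pow_zero, one_mul, pow_zero, Matrix.one_mulVec, tsum_congr hterm,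
      Summable.tsum_finsetSum (fun t _ => (hsum t).mul_left (γ * Mμ s t))]
    congr 1
    calc ∑ t, ∑' k : ℕ, (γ * Mμ s t) * (γ ^ k * ((Mμ ^ k).mulVec rμ) t)
        = ∑ t, (γ * Mμ s t) * Vpi p r γ μ t := by
          exact Finset.sum_congr rfl fun t _ => tsum_mul_left
      _ = γ * ∑ t, Mμ s t * Vpi p r γ μ t := by
          rw [Finset.mul_sum]
          exact Finset.sum_congr rfl fun t _ => by ring
  -- J as a series
  have hJ : ∀ ρ : S → A → ℝ, (∀ s s', 0 ≤ transMat p ρ s s') →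
      (∀ s, ∑ s', transMat p ρ s s' = 1) → Jpi p r d₀ γ ρ
      = ∑' k : ℕ, γ ^ k * ∑ s, Matrix.vecMul d₀ (transMat p ρ ^ k) s * rPol r ρ s := by
    intro ρ h0 h1
    have hsum : ∀ t, Summable
        (fun k => γ ^ k * ((transMat p ρ ^ k).mulVec (rPol r ρ)) t) :=
      hVsM (transMat p ρ) h0 h1 (rPol r ρ)
    calc Jpi p r d₀ γ ρ
        = ∑ s, ∑' k : ℕ, d₀ s * (γ ^ k * ((transMat p ρ ^ k).mulVec (rPol r ρ)) s) := by
          exact Finset.sum_congr rfl fun s _ => tsum_mul_left.symm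
      _ = ∑' k : ℕ, ∑ s, d₀ s * (γ ^ k * ((transMat p ρ ^ k).mulVec (rPol r ρ)) s) :=
          (Summable.tsum_finsetSum (fun s _ => (hsum s).mul_left (d₀ s))).symm
      _ = ∑' k : ℕ, γ ^ k * ∑ s, Matrix.vecMul d₀ (transMat p ρ ^ k) s * rPol r ρ s := by
          apply tsum_congr
          intro k
          have hswap : ∑ s, d₀ s * ((transMat p ρ ^ k).mulVec (rPol r ρ)) s
              = ∑ s, Matrix.vecMul d₀ (transMat p ρ ^ k) s * rPol r ρ s :=
            Matrix.dotProduct_mulVec d₀ (transMat p ρ ^ k) (rPol r ρ)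
          rw [← hswap, Finset.mul_sum]
          exact Finset.sum_congr rfl fun s _ => by ring
  -- the correction term
  have hcorr : ∑ s, dPi p d₀ γ μ s * ∑ a, Qpi p r γ μ s a * μ s a * Real.log (π s a / μ s a)
      = (∑' k : ℕ, γ ^ k * ∑ s, Z k s * rμ s) + ∑' k : ℕ, γ ^ k * ∑ s, Y k s * hhat s := by
    set V : S → ℝ := Vpi p r γ μ with hVdef
    set δ : S → ℝ := dPi p d₀ γ μ with hδdef
    have hδeq : ∀ s, δ s = ∑' k : ℕ, γ ^ k * Y k s := fun s => rfl
    set ζ : S → ℝ := fun s => ∑' k : ℕ, γ ^ k * Z k s with hζdef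
    -- expand Q in the correction
    have hQ : ∀ s, (∑ a, Qpi p r γ μ s a * μ s a * Real.log (π s a / μ s a))
        = hhat s + γ * ∑ t, N s t * V t := by
      intro s
      have hterm : ∀ a, Qpi p r γ μ s a * μ s a * Real.log (π s a / μ s a)
          = μ s a * Real.log (π s a / μ s a) * r s a
            + γ * ∑ t, (μ s a * Real.log (π s a / μ s a) * p s a t) * V t := by
        intro a
        show (r s a + γ * ∑ t, p s a t * V t) * μ s a * Real.log (π s a / μ s a) = _
        calc (r s a + γ * ∑ t, p s a t * V t) * μ s a * Real.log (π s a / μ s a)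
            = μ s a * Real.log (π s a / μ s a) * r s a
              + γ * (μ s a * Real.log (π s a / μ s a) * ∑ t, p s a t * V t) := by ring
          _ = μ s a * Real.log (π s a / μ s a) * r s a
              + γ * ∑ t, (μ s a * Real.log (π s a / μ s a) * p s a t) * V t := by
              have h' : μ s a * Real.log (π s a / μ s a) * ∑ t, p s a t * V t
                  = ∑ t, (μ s a * Real.log (π s a / μ s a) * p s a t) * V t := by
                rw [Finset.mul_sum]
                exact Finset.sum_congr rfl fun t _ => by ring
              rw [h']
      calc (∑ a, Qpi p r γ μ s a * μ s a * Real.log (π s a / μ s a))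
          = ∑ a, (μ s a * Real.log (π s a / μ s a) * r s a
              + γ * ∑ t, (μ s a * Real.log (π s a / μ s a) * p s a t) * V t) :=
            Finset.sum_congr rfl fun a _ => hterm a
        _ = hhat s + γ * ∑ t, N s t * V t := by
            rw [Finset.sum_add_distrib]
            congr 1
            rw [← Finset.mul_sum]
            congr 1
            rw [Finset.sum_comm]
            apply Finset.sum_congr rfl
            intro t _
            rw [show N s t * V t = (∑ a, μ s a * Real.log (π s a / μ s a) * p s a t) * V t
              from rfl, Finset.sum_mul]
    -- the recurrence satisfied by ζ
    have hζrec : ∀ s', ζ s'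
        = ∑ s, ((γ * Mμ s s') * ζ s + (γ * N s s') * δ s) := by
      intro s'
      have h0 : ζ s' = γ ^ 0 * Z 0 s' + ∑' k : ℕ, γ ^ (k + 1) * Z (k + 1) s' :=
        Summable.tsum_eq_zero_add (hZs s')
      have hz0 : Z 0 s' = 0 := rfl
      have hterm : ∀ k, γ ^ (k + 1) * Z (k + 1) s'
          = ∑ s, ((γ * Mμ s s') * (γ ^ k * Z k s) + (γ * N s s') * (γ ^ k * Y k s)) := by
        intro k
        rw [hZrec, mul_add, Finset.mul_sum, Finset.mul_sum, ← Finset.sum_add_distrib]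
        exact Finset.sum_congr rfl fun s _ => by ring
      rw [h0, hz0, mul_zero, zero_add, tsum_congr hterm,
        Summable.tsum_finsetSum (fun s _ => ((hZs s).mul_left (γ * Mμ s s')).add
          ((hYs s).mul_left (γ * N s s')))]
      apply Finset.sum_congr rfl
      intro s _
      rw [Summable.tsum_add ((hZs s).mul_left (γ * Mμ s s')) ((hYs s).mul_left (γ * N s s')),
        tsum_mul_left, tsum_mul_left, hδeq s]
    -- swap lemmas
    have claimA : ∑ s, δ s * hhat s = ∑' k : ℕ, γ ^ k * ∑ s, Y k s * hhat s := by
      calc ∑ s, δ s * hhat s = ∑ s, ∑' k : ℕ, (γ ^ k * Y k s) * hhat s := by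
            exact Finset.sum_congr rfl fun s _ => by rw [hδeq s, tsum_mul_right]
        _ = ∑' k : ℕ, ∑ s, (γ ^ k * Y k s) * hhat s :=
            (Summable.tsum_finsetSum (fun s _ => (hYs s).mul_right (hhat s))).symm
        _ = ∑' k : ℕ, γ ^ k * ∑ s, Y k s * hhat s := by
            apply tsum_congr
            intro k
            rw [Finset.mul_sum]
            exact Finset.sum_congr rfl fun s _ => by ring
    have claimC : ∑ s, ζ s * rμ s = ∑' k : ℕ, γ ^ k * ∑ s, Z k s * rμ s := by
      calc ∑ s, ζ s * rμ s = ∑ s, ∑' k : ℕ, (γ ^ k * Z k s) * rμ s := by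
            exact Finset.sum_congr rfl fun s _ => tsum_mul_right.symm
        _ = ∑' k : ℕ, ∑ s, (γ ^ k * Z k s) * rμ s :=
            (Summable.tsum_finsetSum (fun s _ => (hZs s).mul_right (rμ s))).symm
        _ = ∑' k : ℕ, γ ^ k * ∑ s, Z k s * rμ s := by
            apply tsum_congr
            intro k
            rw [Finset.mul_sum]
            exact Finset.sum_congr rfl fun s _ => by ring
    -- the algebraic identity
    have claimB : ∑ s, ζ s * rμ s = γ * ∑ s, δ s * ∑ t, N s t * V t := by
      have hbell' : ∀ s, rμ s = V s - γ * ∑ t, Mμ s t * V t := by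
        intro s
        have h := bell s
        linarith [bell s]
      have e1 : ∑ s, ζ s * rμ s
          = ∑ s, ζ s * V s - γ * ∑ t, (∑ s, ζ s * Mμ s t) * V t := by
        calc ∑ s, ζ s * rμ s
            = ∑ s, (ζ s * V s - ∑ t, γ * (ζ s * Mμ s t * V t)) := by
              apply Finset.sum_congr rfl
              intro s _
              rw [hbell' s, mul_sub]
              congr 1
              rw [Finset.mul_sum, Finset.mul_sum]
              exact Finset.sum_congr rfl fun t _ => by ring
          _ = ∑ s, ζ s * V s - ∑ s, ∑ t, γ * (ζ s * Mμ s t * V t) :=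
              Finset.sum_sub_distrib _ _
          _ = ∑ s, ζ s * V s - γ * ∑ t, (∑ s, ζ s * Mμ s t) * V t := by
              congr 1
              rw [Finset.sum_comm, Finset.mul_sum]
              apply Finset.sum_congr rfl
              intro t _
              rw [Finset.sum_mul, Finset.mul_sum]
      have e2 : ∑ s, ζ s * V s
          = γ * ∑ t, (∑ s, ζ s * Mμ s t) * V t + γ * ∑ t, (∑ s, δ s * N s t) * V t := by
        calc ∑ t, ζ t * V t
            = ∑ t, (∑ s, ((γ * Mμ s t) * ζ s + (γ * N s t) * δ s)) * V t := by
              exact Finset.sum_congr rfl fun t _ => by rw [← hζrec t]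
          _ = γ * ∑ t, (∑ s, ζ s * Mμ s t) * V t + γ * ∑ t, (∑ s, δ s * N s t) * V t := by
              have pert : ∀ t, (∑ s, ((γ * Mμ s t) * ζ s + (γ * N s t) * δ s)) * V t
                  = γ * ((∑ s, ζ s * Mμ s t) * V t) + γ * ((∑ s, δ s * N s t) * V t) := by
                intro t
                rw [Finset.sum_add_distrib, add_mul, mul_comm γ ((∑ s, ζ s * Mμ s t) * V t),
                  mul_comm γ ((∑ s, δ s * N s t) * V t), mul_assoc, mul_assoc,
                  Finset.sum_mul, Finset.sum_mul, Finset.sum_mul, Finset.sum_mul]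
                congr 1
                · exact Finset.sum_congr rfl fun s _ => by ring
                · exact Finset.sum_congr rfl fun s _ => by ring
              calc ∑ t, (∑ s, ((γ * Mμ s t) * ζ s + (γ * N s t) * δ s)) * V t
                  = ∑ t, (γ * ((∑ s, ζ s * Mμ s t) * V t)
                      + γ * ((∑ s, δ s * N s t) * V t)) :=
                    Finset.sum_congr rfl fun t _ => pert t
                _ = γ * ∑ t, (∑ s, ζ s * Mμ s t) * V t
                    + γ * ∑ t, (∑ s, δ s * N s t) * V t := by
                    rw [Finset.sum_add_distrib, Finset.mul_sum, Finset.mul_sum]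
      have e3 : γ * ∑ t, (∑ s, δ s * N s t) * V t = γ * ∑ s, δ s * ∑ t, N s t * V t := by
        congr 1
        calc ∑ t, (∑ s, δ s * N s t) * V t
            = ∑ t, ∑ s, δ s * N s t * V t :=
              Finset.sum_congr rfl fun t _ => Finset.sum_mul _ _ _
          _ = ∑ s, ∑ t, δ s * N s t * V t := by rw [Finset.sum_comm]
          _ = ∑ s, δ s * ∑ t, N s t * V t := by
              apply Finset.sum_congr rfl
              intro s _
              rw [Finset.mul_sum]
              exact Finset.sum_congr rfl fun t _ => by ring
      rw [e1, e2, e3]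
      ring
    -- put it together
    calc ∑ s, δ s * ∑ a, Qpi p r γ μ s a * μ s a * Real.log (π s a / μ s a)
        = ∑ s, (δ s * hhat s + δ s * (γ * ∑ t, N s t * V t)) := by
          apply Finset.sum_congr rfl
          intro s _
          rw [hQ s, mul_add]
      _ = ∑ s, δ s * hhat s + γ * ∑ s, δ s * ∑ t, N s t * V t := by
          rw [Finset.sum_add_distrib]
          congr 1
          rw [Finset.mul_sum]
          exact Finset.sum_congr rfl fun s _ => by ring
      _ = (∑' k : ℕ, γ ^ k * ∑ s, Z k s * rμ s) + ∑' k : ℕ, γ ^ k * ∑ s, Y k s * hhat s := by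
          rw [← claimB, claimC, claimA]
          ring
  -- final assembly
  rw [hcorr, hJ π hMπ0 hMπrow, hJ μ hMμ0 hMμrow]
  rw [← Summable.tsum_add hZr hYh, ← Summable.tsum_add hYr (hZr.add hYh)]
  apply Summable.tsum_le_tsum _ (hYr.add (hZr.add hYh)) hXr
  intro k
  calc γ ^ k * ∑ s, Y k s * rμ s + (γ ^ k * ∑ s, Z k s * rμ s + γ ^ k * ∑ s, Y k s * hhat s)
      = γ ^ k * (∑ s, Y k s * rμ s + (∑ s, Z k s * rμ s + ∑ s, Y k s * hhat s)) := by ring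
    _ ≤ γ ^ k * ∑ s, X k s * rπ s := mul_le_mul_of_nonneg_left (dagger k) (hγk k)
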